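/- For every γ ≥ 0, the function ψ(γ) = 4 ∫_{1/2}^{1} Φ( γ Φ^{-1}(v) ) dv satisfies ψ(γ) = 1 + (2/π) arctan(γ). In particular, ψ(1) = 3/2. -/

import Mathlib

open MeasureTheory ProbabilityTheory Real

open Set Filter

/-- The standard normal cumulative distribution function `Φ`. -/
noncomputable def stdNormalCDF (t : ℝ) : ℝ := (gaussianReal 0 1 (Set.Iic t)).toReal

noncomputable def stdphi (x : ℝ) : ℝ := (Real.sqrt (2 * Real.pi))⁻¹ * Real.exp (-x ^ 2 / 2)

lemma stdphi_eq_pdf : stdphi = gaussianPDFReal 0 1 := by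
  funext x; simp [stdphi, gaussianPDFReal]

lemma stdphi_cont : Continuous stdphi := by unfold stdphi; fun_prop

lemma stdphi_integrable : Integrable stdphi := stdphi_eq_pdf ▸ integrable_gaussianPDFReal 0 1

lemma stdphi_pos (x : ℝ) : 0 < stdphi x := by
  have := Real.sqrt_pos.mpr (by positivity : (0:ℝ) < 2 * Real.pi)
  exact mul_pos (inv_pos.mpr this) (Real.exp_pos _)

lemma stdphi_le (x : ℝ) : stdphi x ≤ (Real.sqrt (2 * Real.pi))⁻¹ := by
  have h : Real.exp (-x ^ 2 / 2) ≤ 1 := Real.exp_le_one_iff.mpr (by nlinarith [sq_nonneg x])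
  have h2 : (0:ℝ) ≤ (Real.sqrt (2 * Real.pi))⁻¹ := by positivity
  calc stdphi x ≤ (Real.sqrt (2 * Real.pi))⁻¹ * 1 := by
        exact mul_le_mul_of_nonneg_left h h2
    _ = _ := mul_one _

lemma stdNormalCDF_eq (t : ℝ) : stdNormalCDF t = ∫ x in Set.Iic t, stdphi x := by
  rw [stdNormalCDF, gaussianReal_apply_eq_integral 0 one_ne_zero, ENNReal.toReal_ofReal, stdphi_eq_pdf]
  exact integral_nonneg fun x => gaussianPDFReal_nonneg 0 1 x

lemma stdNormalCDF_hasDeriv (t : ℝ) : HasDerivAt stdNormalCDF (stdphi t) t := by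
  have h : stdNormalCDF = fun s => stdNormalCDF 0 + ∫ x in (0:ℝ)..s, stdphi x := by
    funext s
    have := intervalIntegral.integral_Iic_sub_Iic (f := stdphi) (μ := volume)
      stdphi_integrable.integrableOn stdphi_integrable.integrableOn (a := 0) (b := s)
    rw [stdNormalCDF_eq, stdNormalCDF_eq]
    linarith
  rw [h]
  exact (intervalIntegral.integral_hasDerivAt_right stdphi_integrable.intervalIntegrable
    (stdphi_cont.stronglyMeasurable.stronglyMeasurableAtFilter) stdphi_cont.continuousAt).const_add _

lemma stdNormalCDF_mono : StrictMono stdNormalCDF :=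
  strictMono_of_deriv_pos (fun x => by rw [(stdNormalCDF_hasDeriv x).deriv]; exact stdphi_pos x)

lemma stdNormalCDF_lt_one (t : ℝ) : stdNormalCDF t < 1 := by
  have h1 : stdNormalCDF t < stdNormalCDF (t + 1) := stdNormalCDF_mono (by linarith)
  have h2 : stdNormalCDF (t + 1) ≤ 1 := by
    rw [stdNormalCDF]
    exact ENNReal.toReal_le_of_le_ofReal one_pos.le (by simpa using prob_le_one)
  linarith

lemma stdphi_even (x : ℝ) : stdphi (-x) = stdphi x := by simp [stdphi]

lemma stdNormalCDF_zero : stdNormalCDF 0 = 1/2 := by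
  have htot : (∫ x, stdphi x) = 1 := by
    rw [stdphi_eq_pdf]; exact integral_gaussianPDFReal_eq_one 0 one_ne_zero
  have hsplit : (∫ x in Set.Iic (0:ℝ), stdphi x) + (∫ x in Set.Ioi (0:ℝ), stdphi x)
      = ∫ x, stdphi x :=
    intervalIntegral.integral_Iic_add_Ioi stdphi_integrable.integrableOn stdphi_integrable.integrableOn
  have hsym : (∫ x in Set.Iic (0:ℝ), stdphi x) = ∫ x in Set.Ioi (0:ℝ), stdphi x := by
    rw [← neg_zero, ← integral_comp_neg_Iic]
    simp [stdphi_even]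
  rw [stdNormalCDF_eq]; rw [htot, hsym] at hsplit; linarith

lemma stdNormalCDF_tendsto_one : Tendsto stdNormalCDF atTop (nhds 1) := by
  have h := tendsto_measure_Iic_atTop (μ := gaussianReal 0 1)
  rw [measure_univ] at h
  have := (ENNReal.tendsto_toReal ENNReal.one_ne_top).comp h
  exact this

lemma stdNormalCDF_cont : Continuous stdNormalCDF :=
  continuous_iff_continuousAt.mpr fun x => (stdNormalCDF_hasDeriv x).continuousAt

lemma stdNormalCDF_mem (u : ℝ) (hu : 0 < u) : stdNormalCDF u ∈ Set.Ioo (0:ℝ) 1 := by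
  refine ⟨?_, stdNormalCDF_lt_one u⟩
  have := stdNormalCDF_mono hu
  rw [stdNormalCDF_zero] at this
  linarith

lemma image_Ioi : stdNormalCDF '' Set.Ioi 0 = Set.Ioo (1/2) 1 := by
  ext y
  constructor
  · rintro ⟨u, hu, rfl⟩
    exact ⟨by simpa [stdNormalCDF_zero] using stdNormalCDF_mono hu, stdNormalCDF_lt_one u⟩
  · rintro ⟨hy1, hy2⟩
    obtain ⟨c, hc⟩ := (stdNormalCDF_tendsto_one.eventually (eventually_gt_nhds hy2)).exists
    have hc0 : (0:ℝ) < c := by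
      by_contra h
      push_neg at h
      have : stdNormalCDF c ≤ stdNormalCDF 0 := stdNormalCDF_mono.monotone h
      rw [stdNormalCDF_zero] at this; linarith
    have := intermediate_value_Ioo hc0.le (stdNormalCDF_cont.continuousOn (s := Set.Icc 0 c))
    have hmem : y ∈ Set.Ioo (stdNormalCDF 0) (stdNormalCDF c) := by
      rw [stdNormalCDF_zero]; exact ⟨hy1, hc⟩
    obtain ⟨u, hu, hequ⟩ := this hmem
    exact ⟨u, hu.1, hequ⟩

lemma cov (g : ℝ → ℝ) : ∫ v in Set.Ioo (1/2:ℝ) 1, g v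
    = ∫ u in Set.Ioi (0:ℝ), stdphi u * g (stdNormalCDF u) := by
  rw [← image_Ioi, integral_image_eq_integral_abs_deriv_smul measurableSet_Ioi
    (fun x _ => (stdNormalCDF_hasDeriv x).hasDerivWithinAt) stdNormalCDF_mono.injective.injOn g]
  simp [abs_of_pos (stdphi_pos _), smul_eq_mul]

lemma int_mul_exp {b : ℝ} (hb : 0 < b) :
    ∫ x in Set.Ioi (0:ℝ), x * Real.exp (-b * x ^ 2) = (2 * b)⁻¹ := by
  have hderiv : ∀ x ∈ Set.Ioi (0:ℝ), HasDerivAt (fun x => -(2*b)⁻¹ * Real.exp (-b * x ^ 2))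
      (x * Real.exp (-b * x ^ 2)) x := by
    intro x _
    have h1 : HasDerivAt (fun x : ℝ => -b * x ^ 2) (-b * (2 * x)) x := by
      simpa using (hasDerivAt_pow 2 x).const_mul (-b)
    have h2 := (h1.exp).const_mul (-(2*b)⁻¹)
    refine h2.congr_deriv ?_
    field_simp
  have htend : Tendsto (fun x => -(2*b)⁻¹ * Real.exp (-b * x ^ 2)) atTop (nhds 0) := by
    rw [show (0:ℝ) = -(2*b)⁻¹ * 0 by ring]
    refine Tendsto.const_mul _ (Real.tendsto_exp_atBot.comp ?_)
    have h : Tendsto (fun x : ℝ => b * x ^ 2) atTop atTop :=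
      (tendsto_pow_atTop two_ne_zero).const_mul_atTop hb
    have := tendsto_neg_atBot_iff.mpr h
    refine this.congr fun x => by ring
  have hint : IntegrableOn (fun x => x * Real.exp (-b * x ^ 2)) (Set.Ioi 0) :=
    (integrable_mul_exp_neg_mul_sq hb).integrableOn
  have := integral_Ioi_of_hasDerivAt_of_tendsto (f := fun x => -(2*b)⁻¹ * Real.exp (-b * x ^ 2))
    ((Continuous.continuousWithinAt (by fun_prop))) hderiv hint htend
  rw [this]
  simp

lemma stdphi_int_Ioi : ∫ u in Set.Ioi (0:ℝ), stdphi u = 1/2 := by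
  have htot : (∫ x, stdphi x) = 1 := by
    rw [stdphi_eq_pdf]; exact integral_gaussianPDFReal_eq_one 0 one_ne_zero
  have hsplit : (∫ x in Set.Iic (0:ℝ), stdphi x) + (∫ x in Set.Ioi (0:ℝ), stdphi x)
      = ∫ x, stdphi x :=
    intervalIntegral.integral_Iic_add_Ioi stdphi_integrable.integrableOn stdphi_integrable.integrableOn
  have h0 := stdNormalCDF_zero
  rw [stdNormalCDF_eq] at h0
  rw [h0, htot] at hsplit
  linarith

lemma stdNormalCDF_nonneg (t : ℝ) : 0 ≤ stdNormalCDF t := ENNReal.toReal_nonneg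

lemma prod_eq (x u : ℝ) : stdphi u * (u * stdphi (x * u))
    = (2 * Real.pi)⁻¹ * (u * Real.exp (-((1 + x^2)/2) * u ^ 2)) := by
  have h2π : (0:ℝ) ≤ 2 * Real.pi := by positivity
  simp only [stdphi]
  rw [show (Real.sqrt (2*Real.pi))⁻¹ * Real.exp (-u^2/2) * (u * ((Real.sqrt (2*Real.pi))⁻¹ * Real.exp (-(x*u)^2/2)))
      = ((Real.sqrt (2*Real.pi)) * (Real.sqrt (2*Real.pi)))⁻¹ * (u * (Real.exp (-u^2/2) * Real.exp (-(x*u)^2/2))) by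
    rw [mul_inv]; ring]
  rw [Real.mul_self_sqrt h2π, ← Real.exp_add]
  ring_nf

lemma cont_integrand (γ : ℝ) : Continuous (fun u => stdphi u * stdNormalCDF (γ * u)) :=
  stdphi_cont.mul (stdNormalCDF_cont.comp (continuous_const.mul continuous_id))

lemma cont_integrand' (γ : ℝ) : Continuous (fun u => stdphi u * (u * stdphi (γ * u))) :=
  stdphi_cont.mul (continuous_id.mul (stdphi_cont.comp (continuous_const.mul continuous_id)))

lemma bound_integrable' : Integrable (fun u => stdphi u * (u * (Real.sqrt (2 * Real.pi))⁻¹))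
    (volume.restrict (Set.Ioi (0:ℝ))) := by
  have h := (integrable_mul_exp_neg_mul_sq (b := 1/2) (by norm_num)).const_mul
    ((Real.sqrt (2 * Real.pi))⁻¹ * (Real.sqrt (2 * Real.pi))⁻¹)
  refine (h.congr ?_).restrict
  refine Filter.Eventually.of_forall fun u => ?_
  simp only [stdphi]
  ring_nf

lemma integrand_integrable (γ : ℝ) : Integrable (fun u => stdphi u * stdNormalCDF (γ * u))
    (volume.restrict (Set.Ioi (0:ℝ))) := by
  refine Integrable.mono' stdphi_integrable.restrict
    ((cont_integrand γ).aestronglyMeasurable) (Filter.Eventually.of_forall fun u => ?_)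
  rw [Real.norm_eq_abs, abs_mul, abs_of_pos (stdphi_pos u),
    abs_of_nonneg (stdNormalCDF_nonneg _)]
  nlinarith [stdNormalCDF_lt_one (γ * u), stdNormalCDF_nonneg (γ * u), stdphi_pos u]

lemma hasDeriv_G (x : ℝ) :
    HasDerivAt (fun γ => ∫ u in Set.Ioi (0:ℝ), stdphi u * stdNormalCDF (γ * u))
      ((2 * Real.pi)⁻¹ * (1 + x ^ 2)⁻¹) x := by
  set c : ℝ := (Real.sqrt (2 * Real.pi))⁻¹ with hc
  have key := hasDerivAt_integral_of_dominated_loc_of_deriv_le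
    (F := fun γ u => stdphi u * stdNormalCDF (γ * u))
    (F' := fun γ u => stdphi u * (u * stdphi (γ * u)))
    (x₀ := x) (bound := fun u => stdphi u * (u * c))
    (μ := volume.restrict (Set.Ioi (0:ℝ))) (s := Metric.ball x 1) (Metric.ball_mem_nhds x one_pos)
    (Filter.Eventually.of_forall fun γ => (cont_integrand γ).aestronglyMeasurable)
    (integrand_integrable x)
    ((cont_integrand' x).aestronglyMeasurable)
    ?_ bound_integrable' ?_
  · have h2 := key.2
    have heq : (∫ u in Set.Ioi (0:ℝ), stdphi u * (u * stdphi (x * u)))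
        = (2 * Real.pi)⁻¹ * (1 + x ^ 2)⁻¹ := by
      have hb : (0:ℝ) < (1 + x^2)/2 := by positivity
      calc (∫ u in Set.Ioi (0:ℝ), stdphi u * (u * stdphi (x * u)))
          = ∫ u in Set.Ioi (0:ℝ), (2 * Real.pi)⁻¹ * (u * Real.exp (-((1 + x^2)/2) * u ^ 2)) := by
            refine setIntegral_congr_fun measurableSet_Ioi fun u _ => prod_eq x u
        _ = (2 * Real.pi)⁻¹ * ∫ u in Set.Ioi (0:ℝ), u * Real.exp (-((1 + x^2)/2) * u ^ 2) :=
            integral_const_mul _ _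
        _ = (2 * Real.pi)⁻¹ * (2 * ((1 + x^2)/2))⁻¹ := by rw [int_mul_exp hb]
        _ = (2 * Real.pi)⁻¹ * (1 + x ^ 2)⁻¹ := by norm_num
    rwa [heq] at h2
  · -- bound
    refine (ae_restrict_iff' measurableSet_Ioi).mpr (Filter.Eventually.of_forall fun u hu => ?_)
    intro γ _
    rw [Real.norm_eq_abs, abs_mul, abs_of_pos (stdphi_pos u), abs_mul,
      abs_of_nonneg (le_of_lt hu), abs_of_pos (stdphi_pos _)]
    have h1 : stdphi (γ * u) ≤ c := stdphi_le _
    show stdphi u * (u * stdphi (γ * u)) ≤ stdphi u * (u * c)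
    have h2 : u * stdphi (γ * u) ≤ u * c := mul_le_mul_of_nonneg_left h1 (le_of_lt hu)
    exact mul_le_mul_of_nonneg_left h2 (le_of_lt (stdphi_pos u))
  · -- derivative
    refine Filter.Eventually.of_forall fun u γ _ => ?_
    have h1 : HasDerivAt (fun γ : ℝ => γ * u) u γ := hasDerivAt_mul_const u
    have h2 := (stdNormalCDF_hasDeriv (γ * u)).comp γ h1
    have h3 := h2.const_mul (stdphi u)
    refine h3.congr_deriv ?_
    ring

lemma G_closed (γ : ℝ) : (∫ u in Set.Ioi (0:ℝ), stdphi u * stdNormalCDF (γ * u))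
    = 1/4 + Real.arctan γ / (2 * Real.pi) := by
  set D : ℝ → ℝ := fun γ => (∫ u in Set.Ioi (0:ℝ), stdphi u * stdNormalCDF (γ * u))
    - (1/4 + Real.arctan γ / (2 * Real.pi)) with hD
  have hderiv : ∀ x, HasDerivAt D 0 x := by
    intro x
    have h1 : HasDerivAt (fun γ : ℝ => 1/4 + Real.arctan γ / (2 * Real.pi))
        ((2 * Real.pi)⁻¹ * (1 + x ^ 2)⁻¹) x := by
      have := (Real.hasDerivAt_arctan x).div_const (2 * Real.pi)
      have h2 := this.const_add (1/4 : ℝ)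
      refine h2.congr_deriv ?_
      field_simp
    have h := (hasDeriv_G x).sub h1
    rw [sub_self] at h
    exact h
  have hconst : D γ = D 0 :=
    is_const_of_deriv_eq_zero (fun x => (hderiv x).differentiableAt)
      (fun x => (hderiv x).deriv) γ 0
  have hD0 : D 0 = 0 := by
    simp only [hD, zero_mul, stdNormalCDF_zero, Real.arctan_zero, zero_div, add_zero]
    have : (∫ u in Set.Ioi (0:ℝ), stdphi u * (1/2 : ℝ)) = 1/4 := by
      rw [integral_mul_const, stdphi_int_Ioi]; norm_num
    rw [this]; ring
  have := hconst.trans hD0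
  simp only [hD, sub_eq_zero] at this
  exact this

lemma psi_eq (Φinv : ℝ → ℝ) (hΦinv : ∀ p ∈ Set.Ioo (0 : ℝ) 1, stdNormalCDF (Φinv p) = p)
    (γ : ℝ) : (∫ v in (1 / 2 : ℝ)..1, stdNormalCDF (γ * Φinv v))
      = 1/4 + Real.arctan γ / (2 * Real.pi) := by
  rw [intervalIntegral.integral_of_le (by norm_num), integral_Ioc_eq_integral_Ioo,
    cov (fun v => stdNormalCDF (γ * Φinv v))]
  rw [← G_closed γ]
  refine setIntegral_congr_fun measurableSet_Ioi fun u hu => ?_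
  have hmem := stdNormalCDF_mem u hu
  have h1 : stdNormalCDF (Φinv (stdNormalCDF u)) = stdNormalCDF u := hΦinv _ hmem
  have h2 : Φinv (stdNormalCDF u) = u := stdNormalCDF_mono.injective h1
  simp [h2]

/-- **Closed form for `ψ(γ) = 4∫_{1/2}^1 Φ(γ Φ⁻¹(v)) dv`.** For any right inverse `Φinv`
of the standard normal cdf on `(0,1)` and every `γ ≥ 0`,
`ψ(γ) = 1 + (2/π) arctan γ`; in particular `ψ(1) = 3/2`. -/
theorem psi_integral_eq_arctan
    (Φinv : ℝ → ℝ) (hΦinv : ∀ p ∈ Set.Ioo (0 : ℝ) 1, stdNormalCDF (Φinv p) = p) :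
    (∀ γ : ℝ, 0 ≤ γ →
        4 * ∫ v in (1 / 2 : ℝ)..1, stdNormalCDF (γ * Φinv v)
          = 1 + (2 / Real.pi) * Real.arctan γ) ∧
      4 * (∫ v in (1 / 2 : ℝ)..1, stdNormalCDF (1 * Φinv v)) = 3 / 2 := by
  have hmain : ∀ γ : ℝ, 4 * ∫ v in (1 / 2 : ℝ)..1, stdNormalCDF (γ * Φinv v)
      = 1 + (2 / Real.pi) * Real.arctan γ := by
    intro γ
    rw [psi_eq Φinv hΦinv γ]
    have hπ : Real.pi ≠ 0 := Real.pi_ne_zero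
    field_simp
    ring
  refine ⟨fun γ _ => hmain γ, ?_⟩
  rw [hmain 1, Real.arctan_one]
  have hπ : Real.pi ≠ 0 := Real.pi_ne_zero
  field_simp
  ring
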